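/- Let A, B, C, D be pure unit quaternions satisfying B·A = C·D. Then there exist a unit quaternion g and real numbers γ, θ such that g·A·g⁻¹ = i, g·B·g⁻¹ = e^{γk}·i, g·C·g⁻¹ = e^{θk}·i, and g·D·g⁻¹ = e^{(θ−γ)k}·i. (This is the surjectivity of the map ψ : ℝ² → R(S², {a,b,c,d}) onto the traceless character variety of the four-punctured sphere, whose fundamental group is ⟨a,b,c,d | ba = cd⟩.) -/

import Mathlib

open Quaternion

noncomputable section

/-- The quaternion `i`. -/
def qi : ℍ[ℝ] := ⟨0, 1, 0, 0⟩

/-- The quaternion `k`. -/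
def qk : ℍ[ℝ] := ⟨0, 0, 0, 1⟩

/-- The quaternionic exponential `e^{tQ} = cos t + (sin t) • Q` for a pure unit
quaternion `Q`. -/
def expQ (t : ℝ) (Q : ℍ[ℝ]) : ℍ[ℝ] := ((Real.cos t : ℝ) : ℍ[ℝ]) + (Real.sin t) • Q

lemma expQ_qk_mul_qi (t : ℝ) : expQ t qk * qi = ⟨0, Real.cos t, Real.sin t, 0⟩ := by
  ext <;> simp only [Quaternion.re_mul, Quaternion.imI_mul, Quaternion.imJ_mul, Quaternion.imK_mul,
    expQ, Quaternion.re_add, Quaternion.imI_add, Quaternion.imJ_add, Quaternion.imK_add,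
    Quaternion.re_smul, Quaternion.imI_smul, Quaternion.imJ_smul, Quaternion.imK_smul] <;>
    simp [expQ, qk, qi, Quaternion.re_mul, Quaternion.imI_mul, Quaternion.imJ_mul,
      Quaternion.imK_mul]

lemma re_mul_comm (a b : ℍ[ℝ]) : (a * b).re = (b * a).re := by
  simp [Quaternion.re_mul]; ring

lemma conj_eq {g x y : ℍ[ℝ]} (hg : g ≠ 0) (h : g * x = y * g) : g * x * g⁻¹ = y := by
  rw [h, mul_assoc, mul_inv_cancel₀ hg, mul_one]

lemma conj_re {g : ℍ[ℝ]} (x : ℍ[ℝ]) (hg : g ≠ 0) : (g * x * g⁻¹).re = x.re := by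
  rw [re_mul_comm, ← mul_assoc, inv_mul_cancel₀ hg, one_mul]

lemma conj_norm {g : ℍ[ℝ]} (x : ℍ[ℝ]) (hg : ‖g‖ = 1) : ‖g * x * g⁻¹‖ = ‖x‖ := by
  rw [norm_mul, norm_mul, norm_inv, hg]; simp

lemma conj_mul2 {g : ℍ[ℝ]} (x y : ℍ[ℝ]) (hg : g ≠ 0) :
    (g * x * g⁻¹) * (g * y * g⁻¹) = g * (x * y) * g⁻¹ := by
  have h1 : g⁻¹ * (g * (y * g⁻¹)) = y * g⁻¹ := by
    rw [← mul_assoc, inv_mul_cancel₀ hg, one_mul]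
  simp only [mul_assoc, h1]

lemma conj_comp (u g x : ℍ[ℝ]) :
    (u * g) * x * (u * g)⁻¹ = u * (g * x * g⁻¹) * u⁻¹ := by
  rw [mul_inv_rev]; simp only [mul_assoc]

lemma conj_normalize {g : ℍ[ℝ]} (x : ℍ[ℝ]) (hg : g ≠ 0) :
    (‖g‖⁻¹ • g) * x * (‖g‖⁻¹ • g)⁻¹ = g * x * g⁻¹ ∧ ‖(‖g‖⁻¹ • g : ℍ[ℝ])‖ = 1 := by
  have hn : ‖g‖ ≠ 0 := norm_ne_zero_iff.2 hg
  constructor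
  · rw [smul_inv₀, smul_mul_assoc, smul_mul_assoc, mul_smul_comm, smul_smul,
      inv_inv, inv_mul_cancel₀ hn, one_smul]
  · simp [norm_smul, abs_of_nonneg, inv_mul_cancel₀ hn]

lemma norm_one_of_normSq {q : ℍ[ℝ]} (h : Quaternion.normSq q = 1) : ‖q‖ = 1 := by
  have := Quaternion.normSq_eq_norm_mul_self q
  nlinarith [norm_nonneg q]

lemma normSq_of_norm_one {q : ℍ[ℝ]} (h : ‖q‖ = 1) : Quaternion.normSq q = 1 := by
  rw [Quaternion.normSq_eq_norm_mul_self, h]; ring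

lemma pure_unit_sq {A : ℍ[ℝ]} (hn : ‖A‖ = 1) (hre : A.re = 0) : A * A = -1 := by
  have h1 : star A = -A := by
    ext <;> simp [hre]
  have h2 := Quaternion.star_mul_self A
  rw [h1, normSq_of_norm_one hn] at h2
  have : A * A = -(-A * A) := by noncomm_ring
  rw [this, h2]; simp

lemma qi_sq : qi * qi = -1 := by
  ext <;> simp only [Quaternion.re_mul, Quaternion.imI_mul, Quaternion.imJ_mul, Quaternion.imK_mul] <;> simp [qi, Quaternion.re_mul, Quaternion.imI_mul, Quaternion.imJ_mul,
    Quaternion.imK_mul]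

lemma stage1 {A : ℍ[ℝ]} (hn : ‖A‖ = 1) (hre : A.re = 0) :
    ∃ g : ℍ[ℝ], ‖g‖ = 1 ∧ g * A * g⁻¹ = qi := by
  by_cases h : A = -qi
  · refine ⟨⟨0,0,1,0⟩, ?_, ?_⟩
    · apply norm_one_of_normSq
      erw [Quaternion.normSq_def']; norm_num
    · apply conj_eq (by
        intro h0
        have := congrArg QuaternionAlgebra.imJ h0
        simp at this)
      subst h
      ext
      · erw [Quaternion.re_mul, Quaternion.re_mul]; simp only [Quaternion.re_neg, Quaternion.imI_neg, Quaternion.imJ_neg, Quaternion.imK_neg]; simp [qi]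
      · erw [Quaternion.imI_mul, Quaternion.imI_mul]; simp only [Quaternion.re_neg, Quaternion.imI_neg, Quaternion.imJ_neg, Quaternion.imK_neg]; simp [qi]
      · erw [Quaternion.imJ_mul, Quaternion.imJ_mul]; simp only [Quaternion.re_neg, Quaternion.imI_neg, Quaternion.imJ_neg, Quaternion.imK_neg]; simp [qi]
      · erw [Quaternion.imK_mul, Quaternion.imK_mul]; simp only [Quaternion.re_neg, Quaternion.imI_neg, Quaternion.imJ_neg, Quaternion.imK_neg]; simp [qi]
  · have hg0 : A + qi ≠ 0 := by
      intro h0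
      apply h
      linear_combination (norm := module) h0
    have hc : (A + qi) * A = qi * (A + qi) := by
      rw [add_mul, mul_add, pure_unit_sq hn hre, qi_sq]; abel
    obtain ⟨e1, e2⟩ := conj_normalize A hg0
    exact ⟨_, e2, by rw [e1]; exact conj_eq hg0 hc⟩

lemma rot_aux {P Q : ℍ[ℝ]} (hy : P.imK ≠ 0) (hP : P.re = 0) (hQ : Q.re = 0)
    (hrel : P.imJ * Q.imK = P.imK * Q.imJ) :
    ∃ u : ℍ[ℝ], ‖u‖ = 1 ∧ u * qi * u⁻¹ = qi ∧
      (u * P * u⁻¹).re = 0 ∧ (u * P * u⁻¹).imK = 0 ∧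
      (u * Q * u⁻¹).re = 0 ∧ (u * Q * u⁻¹).imK = 0 := by
  set x := P.imJ with hx
  set y := P.imK with hyy
  set r := Real.sqrt (x^2 + y^2) with hr
  have hr2 : r^2 = x^2 + y^2 := Real.sq_sqrt (by positivity)
  have hrpos : 0 < r := Real.sqrt_pos.2 (by positivity)
  have hr0 : r ≠ 0 := ne_of_gt hrpos
  set u₀ : ℍ[ℝ] := ⟨r + x, -y, 0, 0⟩ with hu0def
  have hu0 : u₀ ≠ 0 := by
    intro h0
    apply hy
    have := congrArg QuaternionAlgebra.imI h0
    simpa [hu0def] using this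
  have h1 : u₀ * qi = qi * u₀ := by
    ext <;> simp only [Quaternion.re_mul, Quaternion.imI_mul, Quaternion.imJ_mul, Quaternion.imK_mul] <;> simp [hu0def, qi, Quaternion.re_mul, Quaternion.imI_mul, Quaternion.imJ_mul,
      Quaternion.imK_mul]
  have h2 : u₀ * P = (show ℍ[ℝ] from ⟨0, P.imI, r, 0⟩) * u₀ := by
    ext
    · rw [Quaternion.re_mul, Quaternion.re_mul]; simp only [hu0def, hP, ← hx, ← hyy]; ring
    · rw [Quaternion.imI_mul, Quaternion.imI_mul]; simp only [hu0def, hP, ← hx, ← hyy]; ring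
    · rw [Quaternion.imJ_mul, Quaternion.imJ_mul]; simp only [hu0def, hP, ← hx, ← hyy]; linear_combination -hr2
    · rw [Quaternion.imK_mul, Quaternion.imK_mul]; simp only [hu0def, hP, ← hx, ← hyy]; ring
  have h3 : u₀ * Q = (show ℍ[ℝ] from ⟨0, Q.imI, (x * Q.imJ + y * Q.imK)/r, 0⟩) * u₀ := by
    ext
    · rw [Quaternion.re_mul, Quaternion.re_mul]; simp only [hu0def, hQ, ← hx, ← hyy]; ring
    · rw [Quaternion.imI_mul, Quaternion.imI_mul]; simp only [hu0def, hQ, ← hx, ← hyy]; ring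
    · rw [Quaternion.imJ_mul, Quaternion.imJ_mul]; simp only [hu0def, hQ, ← hx, ← hyy]; field_simp
      linear_combination Q.imJ * hr2 - y * hrel
    · rw [Quaternion.imK_mul, Quaternion.imK_mul]; simp only [hu0def, hQ, ← hx, ← hyy]; field_simp
      linear_combination Q.imK * hr2 + (r + x) * hrel
  obtain ⟨e1, e2⟩ := conj_normalize qi hu0
  obtain ⟨e1P, _⟩ := conj_normalize P hu0
  obtain ⟨e1Q, _⟩ := conj_normalize Q hu0
  refine ⟨‖u₀‖⁻¹ • u₀, e2, ?_, ?_, ?_, ?_, ?_⟩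
  · rw [e1]; exact conj_eq hu0 h1
  · rw [e1P, conj_eq hu0 h2]
  · rw [e1P, conj_eq hu0 h2]
  · rw [e1Q, conj_eq hu0 h3]
  · rw [e1Q, conj_eq hu0 h3]

lemma exists_angle {q : ℍ[ℝ]} (h1 : ‖q‖ = 1) (h2 : q.re = 0) (h3 : q.imK = 0) :
    ∃ t : ℝ, q = expQ t qk * qi := by
  have hsq : q.imI^2 + q.imJ^2 = 1 := by
    have h := normSq_of_norm_one h1
    rw [Quaternion.normSq_def'] at h
    have h2' : q.re ^ 2 = 0 := by rw [h2]; ring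
    have h3' : q.imK ^ 2 = 0 := by rw [h3]; ring
    nlinarith [h, h2', h3']
  set z : ℂ := ⟨q.imI, q.imJ⟩ with hz
  have habs : ‖z‖ = 1 := by
    rw [Complex.norm_def, Complex.normSq_mk, Real.sqrt_eq_one]
    nlinarith [hsq]
  have hz0 : z ≠ 0 := by
    intro h0
    rw [h0] at habs
    simp at habs
  refine ⟨z.arg, ?_⟩
  rw [expQ_qk_mul_qi]
  ext
  · simpa using h2
  · rw [Complex.cos_arg hz0, habs]; simp [hz]
  · rw [Complex.sin_arg, habs]; simp [hz]
  · simpa using h3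

lemma unitE (t : ℝ) : star (expQ t qk * qi) * (expQ t qk * qi) = 1 := by
  rw [Quaternion.star_mul_self, expQ_qk_mul_qi]; erw [Quaternion.normSq_def']
  have h : Real.cos t ^ 2 + Real.sin t ^ 2 = 1 := Real.cos_sq_add_sin_sq t
  have h2 : ({ re := 0, imI := Real.cos t, imJ := Real.sin t, imK := 0 } : ℍ[ℝ]).re ^ 2 +
      ({ re := 0, imI := Real.cos t, imJ := Real.sin t, imK := 0 } : ℍ[ℝ]).imI ^ 2 +
      ({ re := 0, imI := Real.cos t, imJ := Real.sin t, imK := 0 } : ℍ[ℝ]).imJ ^ 2 +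
      ({ re := 0, imI := Real.cos t, imJ := Real.sin t, imK := 0 } : ℍ[ℝ]).imK ^ 2 = 1 := by
    show (0:ℝ) ^ 2 + Real.cos t ^ 2 + Real.sin t ^ 2 + (0:ℝ) ^ 2 = 1
    nlinarith [h]
  rw [h2]
  simp

lemma dcalc (γ θ : ℝ) :
    star (expQ θ qk * qi) * ((expQ γ qk * qi) * qi) = expQ (θ - γ) qk * qi := by
  generalize hE1 : expQ θ qk * qi = E1
  generalize hE2 : expQ γ qk * qi = E2
  generalize hE3 : expQ (θ - γ) qk * qi = E3
  rw [expQ_qk_mul_qi] at hE1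
  rw [expQ_qk_mul_qi] at hE2
  rw [expQ_qk_mul_qi] at hE3
  ext <;> simp only [Quaternion.re_mul, Quaternion.imI_mul, Quaternion.imJ_mul, Quaternion.imK_mul,
    Quaternion.re_star, Quaternion.imI_star, Quaternion.imJ_star, Quaternion.imK_star] <;>
    subst hE1 hE2 hE3 <;>
    simp [qi, Quaternion.re_mul, Quaternion.imI_mul, Quaternion.imJ_mul, Quaternion.imK_mul,
      Real.cos_sub, Real.sin_sub] <;> ring

/-- Surjectivity of the pillowcase parameterization of the traceless character variety of
the four-punctured sphere: any quadruple `(A,B,C,D)` of pure unit quaternions with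
`BA = CD` is simultaneously conjugate to `(i, e^{γk}i, e^{θk}i, e^{(θ-γ)k}i)` for some
`γ, θ ∈ ℝ`. -/
theorem four_punctured_sphere_normal_form (A B C D : ℍ[ℝ])
    (hAnorm : ‖A‖ = 1) (hAre : A.re = 0)
    (hBnorm : ‖B‖ = 1) (hBre : B.re = 0)
    (hCnorm : ‖C‖ = 1) (hCre : C.re = 0)
    (hDnorm : ‖D‖ = 1) (hDre : D.re = 0)
    (hrel : B * A = C * D) :
    ∃ g : ℍ[ℝ], ∃ γ θ : ℝ, ‖g‖ = 1 ∧
      g * A * g⁻¹ = qi ∧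
      g * B * g⁻¹ = expQ γ qk * qi ∧
      g * C * g⁻¹ = expQ θ qk * qi ∧
      g * D * g⁻¹ = expQ (θ - γ) qk * qi := by
  obtain ⟨g₁, hg₁n, hg₁A⟩ := stage1 hAnorm hAre
  have hg₁0 : g₁ ≠ 0 := by
    intro h0; rw [h0] at hg₁n; simp at hg₁n
  set B₁ := g₁ * B * g₁⁻¹ with hB₁
  set C₁ := g₁ * C * g₁⁻¹ with hC₁
  set D₁ := g₁ * D * g₁⁻¹ with hD₁
  have hB₁re : B₁.re = 0 := by rw [hB₁, conj_re _ hg₁0, hBre]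
  have hC₁re : C₁.re = 0 := by rw [hC₁, conj_re _ hg₁0, hCre]
  have hD₁re : D₁.re = 0 := by rw [hD₁, conj_re _ hg₁0, hDre]
  have hB₁n : ‖B₁‖ = 1 := by rw [hB₁, conj_norm _ hg₁n, hBnorm]
  have hC₁n : ‖C₁‖ = 1 := by rw [hC₁, conj_norm _ hg₁n, hCnorm]
  have hrel1 : B₁ * qi = C₁ * D₁ := by
    rw [hB₁, hC₁, hD₁, ← hg₁A, conj_mul2 _ _ hg₁0, conj_mul2 _ _ hg₁0, hrel]
  have hC₁star : star C₁ * C₁ = 1 := by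
    rw [Quaternion.star_mul_self, normSq_of_norm_one hC₁n]
    simp
  have hD₁eq : D₁ = star C₁ * (B₁ * qi) := by
    rw [hrel1, ← mul_assoc, hC₁star, one_mul]
  have hcop : B₁.imJ * C₁.imK = B₁.imK * C₁.imJ := by
    have h0 : (star C₁ * (B₁ * qi)).re = 0 := by rw [← hD₁eq]; exact hD₁re
    simp only [Quaternion.re_mul, Quaternion.imI_mul, Quaternion.imJ_mul, Quaternion.imK_mul] at h0
    simp only [Quaternion.re_mul, Quaternion.imI_mul, Quaternion.imJ_mul, Quaternion.imK_mul,
      Quaternion.re_star, Quaternion.imI_star, Quaternion.imJ_star, Quaternion.imK_star,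
      hB₁re, hC₁re, qi] at h0
    linarith [h0]
  have key : ∃ u : ℍ[ℝ], ‖u‖ = 1 ∧ u * qi * u⁻¹ = qi ∧
      (u * B₁ * u⁻¹).re = 0 ∧ (u * B₁ * u⁻¹).imK = 0 ∧
      (u * C₁ * u⁻¹).re = 0 ∧ (u * C₁ * u⁻¹).imK = 0 := by
    by_cases hbk : B₁.imK = 0
    · by_cases hck : C₁.imK = 0
      · exact ⟨1, by simp, by simp, by simpa using hB₁re, by simpa using hbk,
          by simpa using hC₁re, by simpa using hck⟩
      · have hbj : B₁.imJ = 0 := by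
          rcases mul_eq_zero.1 (by rw [hcop, hbk]; ring : B₁.imJ * C₁.imK = 0) with h | h
          · exact h
          · exact absurd h hck
        obtain ⟨u, k1, k2, k3, k4, k5, k6⟩ :=
          rot_aux hck hC₁re hB₁re (by rw [hbk, hbj]; ring)
        exact ⟨u, k1, k2, k5, k6, k3, k4⟩
    · exact rot_aux hbk hB₁re hC₁re hcop
  obtain ⟨u, hun, huqi, hre2, hk2, hre3, hk3⟩ := key
  have hu0 : u ≠ 0 := by
    intro h0; rw [h0] at hun; simp at hun
  have hgA : (u * g₁) * A * (u * g₁)⁻¹ = qi := by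
    rw [conj_comp, hg₁A, huqi]
  have hgB : (u * g₁) * B * (u * g₁)⁻¹ = u * B₁ * u⁻¹ := by
    rw [conj_comp, hB₁]
  have hgC : (u * g₁) * C * (u * g₁)⁻¹ = u * C₁ * u⁻¹ := by
    rw [conj_comp, hC₁]
  have hB₂n : ‖u * B₁ * u⁻¹‖ = 1 := by rw [conj_norm _ hun, hB₁n]
  have hC₂n : ‖u * C₁ * u⁻¹‖ = 1 := by rw [conj_norm _ hun, hC₁n]
  obtain ⟨γ, hγ⟩ := exists_angle hB₂n hre2 hk2
  obtain ⟨θ, hθ⟩ := exists_angle hC₂n hre3 hk3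
  have hg0 : u * g₁ ≠ 0 := mul_ne_zero hu0 hg₁0
  have hrel2 : (expQ γ qk * qi) * qi = (expQ θ qk * qi) * ((u * g₁) * D * (u * g₁)⁻¹) := by
    rw [← hγ, ← hθ, ← hgB, ← hgC, ← hgA, conj_mul2 _ _ hg0, conj_mul2 _ _ hg0, hrel]
  have hgD : (u * g₁) * D * (u * g₁)⁻¹ = expQ (θ - γ) qk * qi := by
    have hE : star (expQ θ qk * qi) * (expQ θ qk * qi * (u * g₁ * D * (u * g₁)⁻¹)) =
        u * g₁ * D * (u * g₁)⁻¹ := by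
      rw [← mul_assoc, unitE θ, one_mul]
    calc u * g₁ * D * (u * g₁)⁻¹
        = star (expQ θ qk * qi) * (expQ θ qk * qi * (u * g₁ * D * (u * g₁)⁻¹)) := hE.symm
      _ = star (expQ θ qk * qi) * (expQ γ qk * qi * qi) := by rw [← hrel2]
      _ = expQ (θ - γ) qk * qi := dcalc γ θ
  refine ⟨u * g₁, γ, θ, ?_, hgA, by rw [hgB, ← hγ], by rw [hgC, ← hθ], hgD⟩
  rw [norm_mul, hun, hg₁n]; ring
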